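/- The 3×3 integer matrix Φ_T = [[2-g, -1, 1], [2(g-1), 1, 0], [g-1, 1, -1]] is periodic (of finite multiplicative order) for g = 2 (order 6), g = 3 (order 4), and g = 4 (order 6), but has infinite order for every g ≥ 5. -/
import Mathlib


/-- The Coxeter transformation matrix of the singularity category attached to a smooth
projective curve of genus `g`. -/
def PhiT (g : ℤ) : Matrix (Fin 3) (Fin 3) ℤ :=
  !![2 - g, -1, 1; 2 * (g - 1), 1, 0; g - 1, 1, -1]

/-- Cayley–Hamilton for `PhiT g`: its characteristic polynomial is
`x^3 + (g-2)x^2 + (g-2)x + 1 = (x+1)(x^2+(g-3)x+1)`. -/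
lemma phiT_ch (g : ℤ) :
    PhiT g ^ 3 + (g - 2) • PhiT g ^ 2 + (g - 2) • PhiT g + 1 = 0 := by
  have h : PhiT g * PhiT g * PhiT g + (g - 2) • (PhiT g * PhiT g) + (g - 2) • PhiT g + 1 = 0 := by
    simp only [PhiT, Matrix.mul_fin_three]
    ext i j
    fin_cases i <;> fin_cases j <;>
      simp [Matrix.one_apply] <;> ring
  rw [pow_succ, pow_two]
  exact h

/-- Trace of the `n`-th power of `PhiT g`. -/
def tA (g : ℤ) (n : ℕ) : ℤ := (PhiT g ^ n).trace

lemma tA_rec (g : ℤ) (n : ℕ) :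
    tA g (n+3) + (g-2) * tA g (n+2) + (g-2) * tA g (n+1) + tA g n = 0 := by
  have h2 : PhiT g ^ n * (PhiT g ^ 3 + (g - 2) • PhiT g ^ 2 + (g - 2) • PhiT g + 1) = 0 := by
    rw [phiT_ch, mul_zero]
  have h3 := congrArg Matrix.trace h2
  simp only [mul_add, mul_one, mul_smul_comm, ← pow_add, ← pow_succ,
    Matrix.trace_add, Matrix.trace_smul, Matrix.trace_zero, smul_eq_mul] at h3
  simp only [tA]
  linarith [h3]

lemma tA_zero (g : ℤ) : tA g 0 = 3 := by
  simp [tA, Matrix.trace_one]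

lemma tA_one (g : ℤ) : tA g 1 = 2 - g := by
  simp [tA, PhiT, Matrix.trace_fin_three]

lemma tA_two (g : ℤ) : tA g 2 = g^2 - 6*g + 8 := by
  simp [tA, pow_two, PhiT, Matrix.mul_fin_three, Matrix.trace_fin_three]
  ring

/-- The "reduced" trace sequence: trace minus the contribution of the eigenvalue `-1`. -/
def uA (g : ℤ) (n : ℕ) : ℤ := tA g n - (-1)^n

lemma uA_rec (g : ℤ) : ∀ n : ℕ, uA g (n+2) - (3-g) * uA g (n+1) + uA g n = 0 := by
  intro n
  induction n with
  | zero =>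
    simp [uA, tA_zero, tA_one, tA_two]
    ring
  | succ n ih =>
    simp only [uA] at ih ⊢
    linear_combination tA_rec g n - ih

lemma uA_zero (g : ℤ) : uA g 0 = 2 := by simp [uA, tA_zero]

lemma uA_one (g : ℤ) : uA g 1 = 3 - g := by simp [uA, tA_one]; ring

lemma uA_growth (g : ℤ) (hg : 6 ≤ g) :
    ∀ n : ℕ, |uA g (n+1)| ≥ |uA g n| + 1 ∧ |uA g n| ≥ 2 := by
  intro n
  induction n with
  | zero =>
    rw [uA_zero, uA_one]
    constructor
    · rw [abs_of_nonpos (by linarith)]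
      rw [show |(2:ℤ)| = 2 from rfl]
      linarith
    · rw [show |(2:ℤ)| = 2 from rfl]
  | succ n ih =>
    obtain ⟨h1, h2⟩ := ih
    have hrec := uA_rec g n
    have heq : uA g (n+2) = (3-g) * uA g (n+1) - uA g n := by linarith
    have habs : |uA g (n+2)| ≥ |(3-g) * uA g (n+1)| - |uA g n| := by
      rw [heq]
      exact abs_sub_abs_le_abs_sub _ _
    rw [abs_mul, abs_of_nonpos (show (3:ℤ) - g ≤ 0 by linarith)] at habs
    have hpos : |uA g (n+1)| ≥ 3 := by linarith
    constructor
    · nlinarith [abs_nonneg (uA g (n+1))]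
    · linarith

lemma uA_lower (g : ℤ) (hg : 6 ≤ g) : ∀ n : ℕ, |uA g n| ≥ (n : ℤ) + 2 := by
  intro n
  induction n with
  | zero => simp [uA_zero]
  | succ n ih =>
    have := (uA_growth g hg n).1
    push_cast
    linarith

/-- Infinite order for `g ≥ 6` via unbounded traces. -/
lemma phiT_not_periodic_of_six_le (g : ℤ) (hg : 6 ≤ g) (N : ℕ) (hN : 1 ≤ N) :
    PhiT g ^ N ≠ 1 := by
  intro h
  have hpow : PhiT g ^ (N * 2) = 1 := by
    rw [pow_mul, h, one_pow]
  have ht : tA g (N * 2) = 3 := by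
    rw [tA, hpow]
    simp [Matrix.trace_one]
  have hu : uA g (N * 2) = 2 := by
    rw [uA, ht, mul_comm, pow_mul]
    norm_num
  have := uA_lower g hg (N * 2)
  rw [hu] at this
  rw [show |(2:ℤ)| = 2 from rfl] at this
  have : (N : ℤ) ≤ 0 := by push_cast at this ⊢; linarith
  omega

/-- Infinite order for `g = 5`: here `PhiT 5 = -(unipotent)` with nontrivial nilpotent part. -/
lemma phiT5_sq_pow (n : ℕ) :
    (PhiT 5) ^ (2 * n) = 1 + n • ((PhiT 5)^2 - 1) + (n.choose 2) •
      (((PhiT 5)^2 - 1) * ((PhiT 5)^2 - 1)) := by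
  set S := (PhiT 5)^2 - 1 with hS
  have hS3 : (S * S) * S = 0 := by
    rw [hS, pow_two]
    decide
  induction n with
  | zero => simp
  | succ n ih =>
    have hM2 : (PhiT 5) ^ 2 = 1 + S := by rw [hS]; abel
    have h2 : (PhiT 5) ^ (2 * (n+1)) = (PhiT 5) ^ (2 * n) * (1 + S) := by
      rw [← hM2, ← pow_add]
      congr 1
    rw [h2, ih]
    have hchoose : (n+1).choose 2 = n.choose 2 + n := by
      rw [Nat.choose_succ_succ, Nat.choose_one_right, Nat.add_comm]
    rw [hchoose]
    simp only [add_smul, add_mul, mul_add, mul_one, one_mul, smul_mul_assoc, hS3, smul_zero,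
      succ_nsmul]
    abel

lemma phiT_not_periodic_five (N : ℕ) (hN : 1 ≤ N) : PhiT 5 ^ N ≠ 1 := by
  intro h
  set S : Matrix (Fin 3) (Fin 3) ℤ := (PhiT 5)^2 - 1 with hS
  have hS3 : (S * S) * S = 0 := by rw [hS, pow_two]; decide
  have hpow : PhiT 5 ^ (2 * N) = 1 := by
    rw [mul_comm, pow_mul, h, one_pow]
  have hthis := phiT5_sq_pow N
  rw [hpow, ← hS] at hthis
  have hX : N • S + (N.choose 2) • (S * S) = 0 := by
    rw [add_assoc] at hthis
    exact (left_eq_add.mp hthis)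
  have hY : N • (S * S) = 0 := by
    have h4 := congrArg (fun A => A * S) hX
    simpa [add_mul, smul_mul_assoc, mul_assoc, hS3] using h4
  have hT : S * S = !![0,4,-8;0,-16,32;0,-8,16] := by rw [hS, pow_two]; decide
  rw [hT] at hY
  have h2 := congrArg (fun A => A 0 1) hY
  simp only [Matrix.smul_apply, Matrix.zero_apply, nsmul_eq_mul] at h2
  norm_num at h2
  omega

/-- `Φ_T` has finite multiplicative order `6`, `4`, `6` for `g = 2, 3, 4`, respectively,
and infinite order for every `g ≥ 5`. -/
theorem PhiT_periodicity :
    orderOf (PhiT 2) = 6 ∧ orderOf (PhiT 3) = 4 ∧ orderOf (PhiT 4) = 6 ∧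
    ∀ g : ℤ, 5 ≤ g → ∀ N : ℕ, 1 ≤ N → PhiT g ^ N ≠ 1 := by
  refine ⟨?_, ?_, ?_, ?_⟩
  · rw [orderOf_eq_iff (by norm_num)]
    exact ⟨by decide, by decide⟩
  · rw [orderOf_eq_iff (by norm_num)]
    exact ⟨by decide, by decide⟩
  · rw [orderOf_eq_iff (by norm_num)]
    exact ⟨by decide, by decide⟩
  · intro g hg N hN
    rcases eq_or_lt_of_le hg with h5 | h6
    · rw [← h5]
      exact phiT_not_periodic_five N hN
    · exact phiT_not_periodic_of_six_le g (by linarith) N hN
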